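/- Quadratic-form lower bound: let J̃ be an N×(ML) real matrix with Gram matrix G = J̃ᵀ J̃ symmetric positive definite with all eigenvalues in [λ_min, λ_max], let F = (1/M)·J̃ J̃ᵀ, λ > 0, let K = [I_M; I_M; …; I_M]ᵀ ∈ ℝ^{(ML)×M} be the vertical stack of L copies of the M×M identity, and let J = J̃ K. Then for every r ∈ ℝᴹ, rᵀ Jᵀ (F + λI)⁻¹ J r ≥ (λ_min · M · L / (λM + λ_min)) · ‖r‖₂². -/

import Mathlib

open Matrix

/-- Quadratic-form lower bound: let `J̃` be `N × (ML)` with Gram matrix `G = J̃ᵀ * J̃` symmetric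
positive definite with all eigenvalues in `[λ_min, λ_max]`, `F = (1/M) • (J̃ * J̃ᵀ)`, `λ > 0`,
`K` the vertical stack of `L` copies of the `M × M` identity, and `J = J̃ * K`. Then for every
`r ∈ ℝᴹ`, `rᵀ Jᵀ (F + λI)⁻¹ J r ≥ (λ_min · M · L / (λM + λ_min)) · ‖r‖₂²`. -/
theorem quadratic_form_lower_bound (N M L : ℕ) (hM : 1 ≤ M) (lam : ℝ) (hlam : 0 < lam)
    (Jt : Matrix (Fin N) (Fin L × Fin M) ℝ)
    (G : Matrix (Fin L × Fin M) (Fin L × Fin M) ℝ) (hG : G = Jtᵀ * Jt)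
    (hGpd : G.PosDef) (lamMin lamMax : ℝ) (hpos : 0 < lamMin) (hle : lamMin ≤ lamMax)
    (heig : ∀ μ : ℝ, (∃ p : Fin L × Fin M → ℝ, p ≠ 0 ∧ G.mulVec p = μ • p) →
      lamMin ≤ μ ∧ μ ≤ lamMax)
    (F : Matrix (Fin N) (Fin N) ℝ) (hF : F = (1 / (M : ℝ)) • (Jt * Jtᵀ))
    (K : Matrix (Fin L × Fin M) (Fin M) ℝ)
    (hK : K = fun p j => if p.2 = j then (1 : ℝ) else 0)
    (J : Matrix (Fin N) (Fin M) ℝ) (hJ : J = Jt * K)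
    (r : Fin M → ℝ) :
    lamMin * (M : ℝ) * (L : ℝ) / (lam * (M : ℝ) + lamMin) * (r ⬝ᵥ r) ≤
      r ⬝ᵥ (Jᵀ * (F + lam • (1 : Matrix (Fin N) (Fin N) ℝ))⁻¹ * J).mulVec r := by
  have hM0 : (0:ℝ) < (M:ℝ) := by exact_mod_cast Nat.lt_of_lt_of_le Nat.zero_lt_one hM
  have hGh : G.IsHermitian := hGpd.1
  set U : Matrix (Fin L × Fin M) (Fin L × Fin M) ℝ :=
    (hGh.eigenvectorUnitary : Matrix (Fin L × Fin M) (Fin L × Fin M) ℝ) with hUdef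
  set μ : (Fin L × Fin M) → ℝ := hGh.eigenvalues with hμdef
  have hUU : star U * U = 1 := Unitary.coe_star_mul_self hGh.eigenvectorUnitary
  have hUU' : U * star U = 1 := Unitary.coe_mul_star_self hGh.eigenvectorUnitary
  have hspec : G = U * diagonal μ * star U := by
    simpa [RCLike.ofReal_real_eq_id] using hGh.spectral_theorem
  -- eigenvalue lower bounds
  have hμlb : ∀ i, lamMin ≤ μ i := by
    intro i
    refine (heig (μ i) ⟨⇑(hGh.eigenvectorBasis i), ?_, hGh.mulVec_eigenvectorBasis i⟩).1
    intro h0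
    have hb : hGh.eigenvectorBasis i = 0 := by
      ext j; exact congrFun h0 j
    have := hGh.eigenvectorBasis.orthonormal.1 i
    rw [hb, norm_zero] at this
    norm_num at this
  -- the diagonal entries of H in the eigenbasis
  set t : (Fin L × Fin M) → ℝ := fun i => (1 / (M:ℝ)) * μ i + lam with htdef
  have ht0 : ∀ i, 0 < t i := by
    intro i
    have h1 : 0 < μ i := lt_of_lt_of_le hpos (hμlb i)
    have h2 : 0 < (1 / (M:ℝ)) * μ i := by positivity
    show 0 < (1 / (M:ℝ)) * μ i + lam
    linarith
  set H : Matrix (Fin L × Fin M) (Fin L × Fin M) ℝ :=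
    (1 / (M:ℝ)) • G + lam • 1 with hHdef
  have hHspec : H = U * diagonal t * star U := by
    have hdt : diagonal t = (1 / (M:ℝ)) • diagonal μ + lam • (1 : Matrix _ _ ℝ) := by
      ext i j
      by_cases h : i = j
      · subst h; simp [Matrix.diagonal_apply_eq, Matrix.one_apply_eq, htdef, one_div]
      · simp [Matrix.diagonal_apply_ne _ h, Matrix.one_apply_ne h]
    rw [hHdef, hdt, mul_add, add_mul, hspec]
    simp [Matrix.mul_smul, Matrix.smul_mul, hUU', mul_one]
  have hright : H * (U * diagonal (fun i => (t i)⁻¹) * star U) = 1 := by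
    rw [hHspec]
    calc U * diagonal t * star U * (U * diagonal (fun i => (t i)⁻¹) * star U)
        = U * diagonal t * (star U * U) * diagonal (fun i => (t i)⁻¹) * star U := by
          noncomm_ring
      _ = U * (diagonal t * diagonal (fun i => (t i)⁻¹)) * star U := by
          rw [hUU]; noncomm_ring
      _ = 1 := by
          rw [diagonal_mul_diagonal]
          have : (fun i => t i * (t i)⁻¹) = fun _ => (1:ℝ) := by
            funext i; exact mul_inv_cancel₀ (ht0 i).ne'
          rw [this, diagonal_one, mul_one, hUU']
  have hHinv : H⁻¹ = U * diagonal (fun i => (t i)⁻¹) * star U :=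
    Matrix.inv_eq_right_inv hright
  have hHu : IsUnit H.det := Matrix.isUnit_det_of_right_inverse hright
  -- F + lam • 1 is positive definite, hence invertible
  have hFpd : (F + lam • (1 : Matrix (Fin N) (Fin N) ℝ)).PosDef := by
    rw [posDef_iff_dotProduct_mulVec]
    constructor
    · rw [hF]
      simp [Matrix.IsHermitian, conjTranspose_add, conjTranspose_smul, conjTranspose_mul,
        conjTranspose_one]
    · intro x hx
      have h1 : star x ⬝ᵥ ((Jt * Jtᵀ) *ᵥ x) = (Jtᵀ *ᵥ x) ⬝ᵥ (Jtᵀ *ᵥ x) := by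
        rw [← mulVec_mulVec, dotProduct_mulVec]
        congr 1
        simp [mulVec_transpose, star_trivial]
      have h2 : (0:ℝ) ≤ (Jtᵀ *ᵥ x) ⬝ᵥ (Jtᵀ *ᵥ x) := by
        simpa [dotProduct] using Finset.sum_nonneg fun i _ => mul_self_nonneg ((Jtᵀ *ᵥ x) i)
      have h3 : (0:ℝ) < star x ⬝ᵥ x := by
        have hx' : ∃ i, x i ≠ 0 := by
          by_contra h; push_neg at h; exact hx (funext h)
        obtain ⟨i, hi⟩ := hx'
        have : (0:ℝ) < ∑ j, x j * x j :=
          Finset.sum_pos' (fun j _ => mul_self_nonneg _)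
            ⟨i, Finset.mem_univ i, mul_self_pos.mpr hi⟩
        simpa [dotProduct, star_trivial] using this
      have : star x ⬝ᵥ ((F + lam • (1 : Matrix (Fin N) (Fin N) ℝ)) *ᵥ x)
          = (1/(M:ℝ)) * ((Jtᵀ *ᵥ x) ⬝ᵥ (Jtᵀ *ᵥ x)) + lam * (star x ⬝ᵥ x) := by
        rw [add_mulVec, dotProduct_add, hF, smul_mulVec, smul_mulVec,
          dotProduct_smul, dotProduct_smul, h1, one_mulVec]
        simp [smul_eq_mul]
      rw [this]
      have h4 : (0:ℝ) ≤ (1/(M:ℝ)) * ((Jtᵀ *ᵥ x) ⬝ᵥ (Jtᵀ *ᵥ x)) := by positivity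
      nlinarith
  -- key intertwining identity
  have hcomm : (F + lam • (1 : Matrix (Fin N) (Fin N) ℝ)) * Jt = Jt * H := by
    rw [hF, hHdef, Matrix.add_mul, Matrix.mul_add]
    congr 1
    · rw [Matrix.smul_mul, Matrix.mul_smul, Matrix.mul_assoc, ← hG]
    · rw [Matrix.smul_mul, Matrix.mul_smul, Matrix.one_mul, Matrix.mul_one]
  have hkey : (F + lam • (1 : Matrix (Fin N) (Fin N) ℝ))⁻¹ * Jt = Jt * H⁻¹ := by
    have hFu : IsUnit (F + lam • (1 : Matrix (Fin N) (Fin N) ℝ)).det :=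
      isUnit_iff_isUnit_det _ |>.1 hFpd.isUnit
    calc (F + lam • (1 : Matrix (Fin N) (Fin N) ℝ))⁻¹ * Jt
        = (F + lam • (1 : Matrix (Fin N) (Fin N) ℝ))⁻¹ * (Jt * H) * H⁻¹ := by
          rw [Matrix.mul_assoc, Matrix.mul_assoc, Matrix.mul_nonsing_inv _ hHu, Matrix.mul_one]
      _ = (F + lam • (1 : Matrix (Fin N) (Fin N) ℝ))⁻¹ *
            ((F + lam • (1 : Matrix (Fin N) (Fin N) ℝ)) * Jt) * H⁻¹ := by rw [hcomm]
      _ = Jt * H⁻¹ := by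
          rw [← Matrix.mul_assoc, Matrix.nonsing_inv_mul _ hFu, Matrix.one_mul]
  -- the full matrix in diagonal form
  set f : (Fin L × Fin M) → ℝ := fun i => μ i * (t i)⁻¹ with hfdef
  have h1 : Jtᵀ * ((F + lam • (1 : Matrix (Fin N) (Fin N) ℝ))⁻¹ * Jt)
      = U * diagonal f * star U := by
    rw [hkey, ← Matrix.mul_assoc, ← hG, hspec, hHinv]
    calc U * diagonal μ * star U * (U * diagonal (fun i => (t i)⁻¹) * star U)
        = U * diagonal μ * (star U * U) * diagonal (fun i => (t i)⁻¹) * star U := by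
          noncomm_ring
      _ = U * (diagonal μ * diagonal (fun i => (t i)⁻¹)) * star U := by
          rw [hUU]; noncomm_ring
      _ = U * diagonal f * star U := by rw [diagonal_mul_diagonal]
  have hmain : Jᵀ * (F + lam • (1 : Matrix (Fin N) (Fin N) ℝ))⁻¹ * J
      = Kᵀ * (U * diagonal f * star U) * K := by
    have h2 := congrArg (fun A => A * K) h1
    simp only [Matrix.mul_assoc] at h2
    rw [hJ, transpose_mul]
    simp only [Matrix.mul_assoc]
    rw [h2]
  -- pass to the eigenbasis coordinates
  set x : (Fin L × Fin M) → ℝ := K *ᵥ r with hxdef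
  set y : (Fin L × Fin M) → ℝ := star U *ᵥ x with hydef
  have hUt : Uᵀ = star U := by
    ext i j
    simp [Matrix.star_apply, Matrix.transpose_apply]
  have hform : r ⬝ᵥ (Jᵀ * (F + lam • (1 : Matrix (Fin N) (Fin N) ℝ))⁻¹ * J) *ᵥ r
      = y ⬝ᵥ (diagonal f *ᵥ y) := by
    rw [hmain, ← mulVec_mulVec, ← mulVec_mulVec, ← mulVec_mulVec, ← mulVec_mulVec,
      dotProduct_mulVec, vecMul_transpose, ← hxdef, dotProduct_mulVec,
      ← mulVec_transpose, hUt, ← hydef]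
  have hyy : y ⬝ᵥ y = x ⬝ᵥ x := by
    rw [hydef, dotProduct_mulVec, ← mulVec_transpose]
    have h5 : (star U)ᵀ = U := by rw [← hUt, transpose_transpose]
    rw [h5, mulVec_mulVec, hUU', one_mulVec]
  have hxx : x ⬝ᵥ x = (L:ℝ) * (r ⬝ᵥ r) := by
    have hxp : ∀ p : Fin L × Fin M, x p = r p.2 := by
      intro p
      simp [hxdef, Matrix.mulVec, dotProduct, hK]
    simp only [dotProduct]
    rw [Fintype.sum_prod_type]
    simp only [hxp]
    simp [Finset.sum_const, mul_comm]
  -- final estimate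
  set c0 : ℝ := lamMin * (M:ℝ) / (lam * (M:ℝ) + lamMin) with hc0def
  have hden : 0 < lam * (M:ℝ) + lamMin := by positivity
  have hMne : (M:ℝ) ≠ 0 := hM0.ne'
  have hfc : ∀ i, c0 ≤ f i := by
    intro i
    have hμi := hμlb i
    have hti := ht0 i
    show lamMin * (M:ℝ) / (lam * (M:ℝ) + lamMin) ≤ μ i * (t i)⁻¹
    rw [← div_eq_mul_inv, div_le_div_iff₀ hden hti]
    have hti' : t i = (1 / (M:ℝ)) * μ i + lam := rfl
    rw [hti']
    have e1 : lamMin * (M:ℝ) * ((1/(M:ℝ)) * μ i + lam)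
        = lamMin * μ i + lamMin * (M:ℝ) * lam := by
      field_simp
    rw [e1]
    have key : lam * (M:ℝ) * lamMin ≤ lam * (M:ℝ) * μ i :=
      mul_le_mul_of_nonneg_left hμi (mul_pos hlam hM0).le
    linarith [key]
  have hdiag : y ⬝ᵥ (diagonal f *ᵥ y) = ∑ i, f i * (y i * y i) := by
    simp only [dotProduct, mulVec_diagonal]
    congr 1; funext i; ring
  rw [hform, hdiag]
  have hstep : lamMin * (M:ℝ) * (L:ℝ) / (lam * (M:ℝ) + lamMin) * (r ⬝ᵥ r)
      = c0 * (y ⬝ᵥ y) := by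
    rw [hyy, hxx, hc0def]; ring
  rw [hstep]
  have hexp : c0 * (y ⬝ᵥ y) = ∑ i, c0 * (y i * y i) := by
    simp [dotProduct, Finset.mul_sum]
  rw [hexp]
  exact Finset.sum_le_sum fun i _ => mul_le_mul_of_nonneg_right (hfc i) (mul_self_nonneg _)
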